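/- Let G be a finite group of order n with identity e and let S be a subset of G. Suppose a, b, c ∈ S, none equal to e, and the monomial x_e^{n-3} x_a x_b x_c occurs (has nonzero coefficient) in the generalized group determinant Θ_G(S). Then the coefficient of this monomial equals: n/3 if a = b = c; n if exactly two of a, b, c are equal; n if a, b, c are pairwise distinct and a b ≠ b a; and 2n if a, b, c are pairwise distinct and a b = b a. -/

import Mathlib

/-- The group determinant `Θ(G)` of a finite group `G`, as a multivariate polynomial over a
commutative ring `R` in independent commuting variables `x_g` (`g ∈ G`):
`Θ(G) = det((x_{g h⁻¹})_{g,h ∈ G})`. -/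
noncomputable def groupDet (R G : Type*) [CommRing R] [Group G] [Finite G] :
    MvPolynomial G R := by
  classical
  letI := Fintype.ofFinite G
  exact Matrix.det (Matrix.of fun g h : G => MvPolynomial.X (g * h⁻¹))

/-- The generalized group determinant `Θ_G(S)` of a finite group `G` to a subset `S ⊆ G`,
in variables `x_s` (`s ∈ S`), where `x_g = 0` for `g ∈ G \ S`:
`Θ_G(S) = det((x_{g h⁻¹})_{g,h ∈ G})`. -/
noncomputable def genGroupDet (R G : Type*) [CommRing R] [Group G] [Finite G] (S : Set G) :
    MvPolynomial S R := by
  classical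
  letI := Fintype.ofFinite G
  exact Matrix.det (Matrix.of fun g h : G =>
    if hm : g * h⁻¹ ∈ S then MvPolynomial.X (⟨g * h⁻¹, hm⟩ : S) else 0)

open Finsupp Equiv Equiv.Perm Finset

section Cyc
variable {α : Type*} [DecidableEq α]

/-- The 3-cycle sending `p ↦ q ↦ r ↦ p`. -/
def cyc (p q r : α) : Equiv.Perm α := Equiv.swap p r * Equiv.swap p q

lemma cyc_snd (p q r : α) : cyc p q r q = r := by
  by_cases h : q = p
  · subst h; simp [cyc]
  · simp only [cyc, Equiv.Perm.mul_apply, Equiv.swap_apply_right, Equiv.swap_apply_left]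

lemma cyc_fst {p q r : α} (hpq : p ≠ q) (hqr : q ≠ r) : cyc p q r p = q := by
  simp [cyc, Equiv.swap_apply_left, Equiv.swap_apply_of_ne_of_ne (Ne.symm hpq) hqr]

lemma cyc_thd {p q r : α} (hpr : p ≠ r) (hqr : q ≠ r) : cyc p q r r = p := by
  simp [cyc, Equiv.swap_apply_of_ne_of_ne (Ne.symm hpr) (Ne.symm hqr),
    Equiv.swap_apply_right]

lemma cyc_fix {p q r x : α} (hp : x ≠ p) (hq : x ≠ q) (hr : x ≠ r) : cyc p q r x = x := by
  simp [cyc, Equiv.swap_apply_of_ne_of_ne, hp, hq, hr]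

lemma cyc_rot {p q r : α} (hpq : p ≠ q) (hqr : q ≠ r) (hpr : p ≠ r) :
    cyc p q r = cyc q r p := by
  ext x
  by_cases hx1 : x = p
  · subst hx1; rw [cyc_fst hpq hqr, cyc_thd (Ne.symm hpq) (Ne.symm hpr)]
  by_cases hx2 : x = q
  · subst hx2; rw [cyc_snd, cyc_fst hqr (Ne.symm hpr)]
  by_cases hx3 : x = r
  · subst hx3; rw [cyc_thd hpr hqr, cyc_snd]
  · rw [cyc_fix hx1 hx2 hx3, cyc_fix hx2 hx3 hx1]

lemma sign_cyc {p q r : α} [Fintype α] (hpq : p ≠ q) (hpr : p ≠ r) :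
    Equiv.Perm.sign (cyc p q r) = 1 := by
  simp [cyc, Equiv.Perm.sign_swap, hpq, hpr]

end Cyc

section Singles
variable {α : Type*}

lemma two_singles {u v b c : α} (h : Finsupp.single u 1 + Finsupp.single v 1
    = Finsupp.single b 1 + Finsupp.single c 1) : (u = b ∧ v = c) ∨ (u = c ∧ v = b) := by
  classical
  have hu : u = b ∨ u = c := by
    have := DFunLike.congr_fun h u
    rw [Finsupp.add_apply, Finsupp.add_apply, Finsupp.single_eq_same] at this
    by_contra hcon
    push_neg at hcon
    rw [Finsupp.single_eq_of_ne hcon.1, Finsupp.single_eq_of_ne hcon.2]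
      at this
    omega
  rcases hu with hu | hu
  · subst hu
    left
    refine ⟨rfl, ?_⟩
    have h2 : Finsupp.single v 1 = Finsupp.single c (1:ℕ) := by
      exact add_left_cancel h
    rcases (Finsupp.single_eq_single_iff _ _ _ _).mp h2 with ⟨h3, _⟩ | ⟨h3, _⟩
    · exact h3
    · omega
  · subst hu
    right
    refine ⟨rfl, ?_⟩
    rw [add_comm] at h
    have h2 : Finsupp.single v 1 = Finsupp.single b (1:ℕ) := by
      have h' : Finsupp.single v 1 + Finsupp.single u 1
          = Finsupp.single b 1 + Finsupp.single u 1 := by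
        rw [h]
      exact add_right_cancel h'
    rcases (Finsupp.single_eq_single_iff _ _ _ _).mp h2 with ⟨h3, _⟩ | ⟨h3, _⟩
    · exact h3
    · omega

lemma three_singles {u v w a b c : α}
    (h : Finsupp.single u 1 + Finsupp.single v 1 + Finsupp.single w 1
      = Finsupp.single a 1 + Finsupp.single b 1 + Finsupp.single c 1) :
    (u = a ∧ ((v = b ∧ w = c) ∨ (v = c ∧ w = b))) ∨
    (u = b ∧ ((v = a ∧ w = c) ∨ (v = c ∧ w = a))) ∨
    (u = c ∧ ((v = a ∧ w = b) ∨ (v = b ∧ w = a))) := by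
  classical
  have hu : u = a ∨ u = b ∨ u = c := by
    have := DFunLike.congr_fun h u
    rw [Finsupp.add_apply, Finsupp.add_apply, Finsupp.add_apply, Finsupp.add_apply,
      Finsupp.single_eq_same] at this
    by_contra hcon
    push_neg at hcon
    rw [Finsupp.single_eq_of_ne hcon.1, Finsupp.single_eq_of_ne hcon.2.1,
      Finsupp.single_eq_of_ne hcon.2.2] at this
    omega
  rcases hu with hu | hu | hu
  · subst hu
    refine Or.inl ⟨rfl, two_singles ?_⟩
    have h' : Finsupp.single u 1 + (Finsupp.single v 1 + Finsupp.single w 1)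
        = Finsupp.single u 1 + (Finsupp.single b 1 + Finsupp.single c 1) := by
      rw [← add_assoc, ← add_assoc]; exact h
    exact add_left_cancel h'
  · subst hu
    refine Or.inr (Or.inl ⟨rfl, two_singles ?_⟩)
    have h' : Finsupp.single u 1 + (Finsupp.single v 1 + Finsupp.single w 1)
        = Finsupp.single u 1 + (Finsupp.single a 1 + Finsupp.single c 1) := by
      rw [← add_assoc]
      rw [h]
      abel
    exact add_left_cancel h'
  · subst hu
    refine Or.inr (Or.inr ⟨rfl, two_singles ?_⟩)
    have h' : Finsupp.single u 1 + (Finsupp.single v 1 + Finsupp.single w 1)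
        = Finsupp.single u 1 + (Finsupp.single a 1 + Finsupp.single b 1) := by
      rw [← add_assoc]
      rw [h]
      abel
    exact add_left_cancel h'

end Singles

lemma prodX {ι τ : Type*} (s : Finset ι) (f : ι → τ) :
    ∏ i ∈ s, (MvPolynomial.X (f i) : MvPolynomial τ ℂ)
      = MvPolynomial.monomial (∑ i ∈ s, Finsupp.single (f i) 1) 1 := by
  induction s using Finset.cons_induction with
  | empty => simp
  | cons a s ha ih =>
    rw [Finset.prod_cons, Finset.sum_cons, ih, MvPolynomial.X,
      MvPolynomial.monomial_mul, one_mul]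


section Main
variable {G : Type*} [Group G] [Fintype G] [DecidableEq G]

/-- The weight of a permutation: the multiset (as a `Finsupp`) of values `σ g * g⁻¹`. -/
noncomputable def wgt (σ : Equiv.Perm G) : G →₀ ℕ := ∑ g : G, Finsupp.single (σ g * g⁻¹) 1

/-- The target exponent vector. -/
noncomputable def dd (a b c : G) : G →₀ ℕ :=
  Finsupp.single 1 (Fintype.card G - 3) + Finsupp.single a 1 +
    Finsupp.single b 1 + Finsupp.single c 1

lemma wgt_apply (σ : Equiv.Perm G) (t : G) :
    wgt σ t = (Finset.univ.filter (fun g => σ g * g⁻¹ = t)).card := by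
  rw [wgt, Finset.card_filter, Finsupp.finset_sum_apply]
  exact Finset.sum_congr rfl fun g _ => Finsupp.single_apply

lemma wgt_cyc {p q r : G} (hpq : p ≠ q) (hqr : q ≠ r) (hpr : p ≠ r) :
    wgt (cyc p q r) = Finsupp.single 1 (Fintype.card G - 3) +
      Finsupp.single (q * p⁻¹) 1 + Finsupp.single (r * q⁻¹) 1 +
      Finsupp.single (p * r⁻¹) 1 := by
  classical
  have hsub : ({p, q, r} : Finset G) ⊆ Finset.univ := Finset.subset_univ _
  rw [wgt, ← Finset.sum_add_sum_compl ({p, q, r} : Finset G)]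
  have h1 : ∑ g ∈ ({p, q, r} : Finset G), Finsupp.single (cyc p q r g * g⁻¹) (1:ℕ)
      = Finsupp.single (q * p⁻¹) 1 + Finsupp.single (r * q⁻¹) 1 +
        Finsupp.single (p * r⁻¹) 1 := by
    rw [Finset.sum_insert (by simp [hpq, hpr]), Finset.sum_insert (by simp [hqr]),
      Finset.sum_singleton, cyc_fst hpq hqr, cyc_snd, cyc_thd hpr hqr, add_assoc]
  have h2 : ∑ g ∈ ({p, q, r} : Finset G)ᶜ, Finsupp.single (cyc p q r g * g⁻¹) (1:ℕ)
      = Finsupp.single (1:G) (Fintype.card G - 3) := by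
    have : ∀ g ∈ ({p, q, r} : Finset G)ᶜ, Finsupp.single (cyc p q r g * g⁻¹) (1:ℕ)
        = Finsupp.single (1:G) 1 := by
      intro g hg
      simp only [Finset.mem_compl, Finset.mem_insert, Finset.mem_singleton, not_or] at hg
      rw [cyc_fix hg.1 hg.2.1 hg.2.2, mul_inv_cancel]
    rw [Finset.sum_congr rfl this, Finset.sum_const, Finset.card_compl]
    have hc : ({p, q, r} : Finset G).card = 3 := by
      rw [Finset.card_insert_of_notMem (by simp [hpq, hpr]),
        Finset.card_insert_of_notMem (by simp [hqr]), Finset.card_singleton]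
    rw [hc, Finsupp.smul_single, smul_eq_mul, mul_one]
  rw [h1, h2]
  abel

lemma sum_single_apply (x : G) (k : ℕ) : ∑ t : G, Finsupp.single x k t = k := by
  simp [Finsupp.single_apply]

lemma card_ge_of_wgt_eq {σ : Equiv.Perm G} {a b c : G} (hσ : wgt σ = dd a b c) :
    3 ≤ Fintype.card G := by
  have h1 : ∑ t : G, wgt σ t = Fintype.card G := by
    rw [wgt]
    have : ∀ t : G, (∑ g : G, Finsupp.single (σ g * g⁻¹) (1:ℕ)) t
        = ∑ g : G, Finsupp.single (σ g * g⁻¹) (1:ℕ) t :=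
      fun t => Finsupp.finset_sum_apply _ _ _
    rw [Finset.sum_congr rfl fun t _ => this t, Finset.sum_comm]
    rw [Finset.sum_congr rfl fun g _ => sum_single_apply (σ g * g⁻¹) 1]
    simp
  have h2 : ∑ t : G, dd a b c t = (Fintype.card G - 3) + 1 + 1 + 1 := by
    simp only [dd, Finsupp.add_apply, Finset.sum_add_distrib, sum_single_apply]
  rw [hσ, h2] at h1
  omega

lemma wgt_cyc_eq_dd {p q r a b c : G} (hpq : p ≠ q) (hqr : q ≠ r) (hpr : p ≠ r)
    (heq : Finsupp.single (q * p⁻¹) 1 + Finsupp.single (r * q⁻¹) 1 +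
      Finsupp.single (p * r⁻¹) 1
      = Finsupp.single a 1 + Finsupp.single b 1 + Finsupp.single c 1) :
    wgt (cyc p q r) = dd a b c := by
  rw [wgt_cyc hpq hqr hpr, dd]
  ext t
  have := DFunLike.congr_fun heq t
  simp only [Finsupp.add_apply] at this ⊢
  omega

lemma exists_cyc {σ : Equiv.Perm G} {a b c : G} (ha : a ≠ 1) (hb : b ≠ 1) (hc : c ≠ 1)
    (hσ : wgt σ = dd a b c) :
    ∃ p q r : G, p ≠ q ∧ q ≠ r ∧ p ≠ r ∧ σ = cyc p q r ∧
      Finsupp.single (q * p⁻¹) 1 + Finsupp.single (r * q⁻¹) 1 +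
        Finsupp.single (p * r⁻¹) 1
        = Finsupp.single a 1 + Finsupp.single b 1 + Finsupp.single c 1 := by
  have hn : 3 ≤ Fintype.card G := card_ge_of_wgt_eq hσ
  have hfix : (Finset.univ.filter (fun g => σ g = g)).card = Fintype.card G - 3 := by
    have h1 : wgt σ 1 = Fintype.card G - 3 := by
      rw [hσ, dd]
      simp only [Finsupp.add_apply, Finsupp.single_eq_same, Finsupp.single_eq_of_ne' ha,
        Finsupp.single_eq_of_ne' hb, Finsupp.single_eq_of_ne' hc]
      omega
    rw [wgt_apply] at h1
    rw [← h1]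
    congr 1
    ext g
    simp [mul_inv_eq_one]
  have hsupp : σ.support.card = 3 := by
    have h2 : (Finset.univ.filter (fun g => σ g = g)).card + σ.support.card
        = Fintype.card G := by
      rw [Equiv.Perm.support]
      exact Finset.card_filter_add_card_filter_not (fun g => σ g = g)
    omega
  obtain ⟨p, q, r, hpq, hpr, hqr, hU⟩ := Finset.card_eq_three.mp hsupp
  have hmem : ∀ x : G, x ∈ σ.support ↔ (x = p ∨ x = q ∨ x = r) := by
    intro x; rw [hU]; simp
  have hp : p ∈ σ.support := (hmem p).mpr (Or.inl rfl)
  have hq : q ∈ σ.support := (hmem q).mpr (Or.inr (Or.inl rfl))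
  have hr : r ∈ σ.support := (hmem r).mpr (Or.inr (Or.inr rfl))
  have heqd : ∀ p' q' r' : G, p' ≠ q' → q' ≠ r' → p' ≠ r' → σ = cyc p' q' r' →
      ∃ p q r : G, p ≠ q ∧ q ≠ r ∧ p ≠ r ∧ σ = cyc p q r ∧
      Finsupp.single (q * p⁻¹) 1 + Finsupp.single (r * q⁻¹) 1 +
        Finsupp.single (p * r⁻¹) 1
        = Finsupp.single a 1 + Finsupp.single b 1 + Finsupp.single c 1 := by
    intro p' q' r' h1 h2 h3 h4
    refine ⟨p', q', r', h1, h2, h3, h4, ?_⟩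
    have h5 := hσ
    rw [h4, wgt_cyc h1 h2 h3, dd] at h5
    ext t
    have := DFunLike.congr_fun h5 t
    simp only [Finsupp.add_apply] at this ⊢
    omega
  -- σ maps support to support without fixed points
  have hσp : σ p = q ∨ σ p = r := by
    have h1 : σ p ∈ σ.support := Equiv.Perm.apply_mem_support.mpr hp
    have h2 : σ p ≠ p := Equiv.Perm.mem_support.mp hp
    rcases (hmem (σ p)).mp h1 with h | h | h
    · exact absurd h h2
    · exact Or.inl h
    · exact Or.inr h
  rcases hσp with hσp | hσp
  · -- σ p = q; then σ q = r, σ r = p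
    have hσq : σ q = r := by
      have h1 : σ q ∈ σ.support := Equiv.Perm.apply_mem_support.mpr hq
      have h2 : σ q ≠ q := Equiv.Perm.mem_support.mp hq
      rcases (hmem (σ q)).mp h1 with h | h | h
      · -- σ q = p: then σ r has nowhere to go
        exfalso
        have h3 : σ r ∈ σ.support := Equiv.Perm.apply_mem_support.mpr hr
        have h4 : σ r ≠ r := Equiv.Perm.mem_support.mp hr
        rcases (hmem (σ r)).mp h3 with h' | h' | h'
        · exact hqr (σ.injective (h'.trans h.symm)).symm
        · exact hpr (σ.injective (h'.trans hσp.symm)).symm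
        · exact h4 h'
      · exact absurd h h2
      · exact h
    have hσr : σ r = p := by
      have h1 : σ r ∈ σ.support := Equiv.Perm.apply_mem_support.mpr hr
      have h2 : σ r ≠ r := Equiv.Perm.mem_support.mp hr
      rcases (hmem (σ r)).mp h1 with h | h | h
      · exact h
      · exact absurd (σ.injective (h.trans hσp.symm)) (Ne.symm hpr)
      · exact absurd h h2
    refine heqd p q r hpq hqr hpr ?_
    ext x
    by_cases hx1 : x = p
    · subst hx1; rw [cyc_fst hpq hqr]; exact hσp
    by_cases hx2 : x = q
    · subst hx2; rw [cyc_snd]; exact hσq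
    by_cases hx3 : x = r
    · subst hx3; rw [cyc_thd hpr hqr]; exact hσr
    · rw [cyc_fix hx1 hx2 hx3]
      have hxs : x ∉ σ.support := by simp [hmem, hx1, hx2, hx3]
      exact Equiv.Perm.notMem_support.mp hxs
  · -- σ p = r; then σ r = q, σ q = p
    have hσr : σ r = q := by
      have h1 : σ r ∈ σ.support := Equiv.Perm.apply_mem_support.mpr hr
      have h2 : σ r ≠ r := Equiv.Perm.mem_support.mp hr
      rcases (hmem (σ r)).mp h1 with h | h | h
      · -- σ r = p: then σ q has nowhere to go
        exfalso
        have h3 : σ q ∈ σ.support := Equiv.Perm.apply_mem_support.mpr hq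
        have h4 : σ q ≠ q := Equiv.Perm.mem_support.mp hq
        rcases (hmem (σ q)).mp h3 with h' | h' | h'
        · exact hqr (σ.injective (h'.trans h.symm))
        · exact h4 h'
        · exact hpq (σ.injective (h'.trans hσp.symm)).symm
      · exact h
      · exact absurd h h2
    have hσq : σ q = p := by
      have h1 : σ q ∈ σ.support := Equiv.Perm.apply_mem_support.mpr hq
      have h2 : σ q ≠ q := Equiv.Perm.mem_support.mp hq
      rcases (hmem (σ q)).mp h1 with h | h | h
      · exact h
      · exact absurd h h2
      · exact absurd (σ.injective (h.trans hσp.symm)) (Ne.symm hpq)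
  -- σ = cyc p r q
    refine heqd p r q hpr (Ne.symm hqr) hpq ?_
    ext x
    by_cases hx1 : x = p
    · subst hx1; rw [cyc_fst hpr (Ne.symm hqr)]; exact hσp
    by_cases hx3 : x = r
    · subst hx3; rw [cyc_snd]; exact hσr
    by_cases hx2 : x = q
    · subst hx2; rw [cyc_thd hpq (Ne.symm hqr)]; exact hσq
    · rw [cyc_fix hx1 hx3 hx2]
      have hxs : x ∉ σ.support := by simp [hmem, hx1, hx2, hx3]
      exact Equiv.Perm.notMem_support.mp hxs

/-- standard cycle with value pattern (x, y, (y x)⁻¹) starting at g -/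
def psi (x y : G) (g : G) : Equiv.Perm G := cyc g (x * g) (y * (x * g))

lemma psi_dist1 {x : G} (hx : x ≠ 1) (g : G) : g ≠ x * g := by
  intro h; exact hx (by rwa [right_eq_mul] at h)

lemma psi_dist2 {y : G} (hy : y ≠ 1) (x g : G) : x * g ≠ y * (x * g) := by
  intro h; exact hy (by rwa [right_eq_mul] at h)

lemma psi_dist3 {x y : G} (hyx : y * x ≠ 1) (g : G) : g ≠ y * (x * g) := by
  intro h
  rw [← mul_assoc] at h
  exact hyx (by rwa [right_eq_mul] at h)

lemma wgt_psi {x y : G} (hx : x ≠ 1) (hy : y ≠ 1) (hyx : y * x ≠ 1) (g : G) :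
    wgt (psi x y g) = Finsupp.single 1 (Fintype.card G - 3) + Finsupp.single x 1 +
      Finsupp.single y 1 + Finsupp.single (y * x)⁻¹ 1 := by
  rw [psi, wgt_cyc (psi_dist1 hx g) (psi_dist2 hy x g) (psi_dist3 hyx g)]
  have h1 : x * g * g⁻¹ = x := mul_inv_cancel_right x g
  have h2 : y * (x * g) * (x * g)⁻¹ = y := mul_inv_cancel_right y (x * g)
  have h3 : g * (y * (x * g))⁻¹ = (y * x)⁻¹ := by
    rw [← mul_assoc, mul_inv_rev, mul_inv_rev, ← mul_assoc, mul_inv_cancel, one_mul]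
  rw [h1, h2, h3]

lemma psi_apply1 {x y : G} (hx : x ≠ 1) (hy : y ≠ 1) (g : G) :
    psi x y g g = x * g :=
  cyc_fst (psi_dist1 hx g) (psi_dist2 hy x g)

lemma psi_apply2 (x y g : G) : psi x y g (x * g) = y * (x * g) := cyc_snd _ _ _

lemma psi_apply3 {x y : G} (hyx : y * x ≠ 1) (hy : y ≠ 1) (g : G) :
    psi x y g (y * (x * g)) = g :=
  cyc_thd (psi_dist3 hyx g) (psi_dist2 hy x g)

lemma psi_moved {x y g z : G} (h : psi x y g z ≠ z) :
    z = g ∨ z = x * g ∨ z = y * (x * g) := by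
  by_contra hcon
  push_neg at hcon
  exact h (cyc_fix hcon.1 hcon.2.1 hcon.2.2)

lemma psi_inj_ne {x y : G} (hx : x ≠ 1) (hy : y ≠ 1) (hyx : y * x ≠ 1) (hxy : x ≠ y)
    (h3 : x * (y * x) ≠ 1) : Function.Injective (psi x y) := by
  intro g g' h
  have hmoved : psi x y g g' ≠ g' := by
    rw [h, psi_apply1 hx hy]; exact (psi_dist1 hx g').symm
  rcases psi_moved hmoved with h1 | h1 | h1
  · exact h1.symm
  · exfalso
    have e1 : psi x y g g' = x * g' := by rw [h, psi_apply1 hx hy]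
    rw [h1, psi_apply2] at e1
    exact hxy (mul_right_cancel e1).symm
  · exfalso
    have e1 : psi x y g g' = x * g' := by rw [h, psi_apply1 hx hy]
    rw [h1, psi_apply3 hyx hy] at e1
    have e2 : x * (y * (x * g)) = (x * (y * x)) * g := by simp [mul_assoc]
    rw [e2] at e1
    exact h3 (right_eq_mul.mp e1)

lemma psi_inj_eq {a : G} (ha : a ≠ 1) (haa : a * a ≠ 1) (ha3 : a * (a * a) ≠ 1) :
    Function.Injective (psi a a) := by
  intro g g' h
  have hmoved : psi a a g g' ≠ g' := by
    rw [h, psi_apply1 ha ha]; exact (psi_dist1 ha g').symm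
  have key : ∀ z, z = a * (a * (a * z)) → False := by
    intro z hz
    have e2 : a * (a * (a * z)) = (a * (a * a)) * z := by simp [mul_assoc]
    rw [e2] at hz
    exact ha3 (right_eq_mul.mp hz)
  rcases psi_moved hmoved with h1 | h1 | h1
  · exact h1.symm
  · exfalso
    have e1 : psi a a g (a * g') = a * (a * g') := by rw [h, psi_apply2]
    rw [h1] at e1
    rw [psi_apply3 haa ha] at e1
    exact key g (by rw [e1] at *; rw [← h1] at *; exact e1 ▸ rfl)
  · exfalso
    have e1 : psi a a g g' = a * g' := by rw [h, psi_apply1 ha ha]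
    rw [h1, psi_apply3 haa ha] at e1
    exact key g (by rw [← h1] at *; exact e1)

lemma hrel_cyc (p q r : G) : (p * r⁻¹) * ((r * q⁻¹) * (q * p⁻¹)) = 1 := by
  simp [mul_assoc]

lemma card_two_eq {a c : G} (ha : a ≠ 1) (hc : c ≠ 1) (hac : a ≠ c)
    (hK : (Finset.univ.filter fun σ : Equiv.Perm G => wgt σ = dd a a c).Nonempty) :
    (Finset.univ.filter fun σ : Equiv.Perm G => wgt σ = dd a a c).card
      = Fintype.card G := by
  -- derive c = (a * a)⁻¹
  have hcc : c = (a * a)⁻¹ := by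
    obtain ⟨σ0, hσ0⟩ := hK
    rw [Finset.mem_filter] at hσ0
    obtain ⟨p, q, r, hpq, hqr, hpr, hcyc, heq⟩ := exists_cyc ha ha hc hσ0.2
    have hrel := hrel_cyc p q r
    rcases three_singles heq with ⟨hu, ⟨hv, hw⟩ | ⟨hv, hw⟩⟩ | ⟨hu, ⟨hv, hw⟩ | ⟨hv, hw⟩⟩ |
      ⟨hu, ⟨hv, hw⟩ | ⟨hv, hw⟩⟩ <;> rw [hu, hv, hw] at hrel
    · exact eq_inv_of_mul_eq_one_left hrel
    · -- a * (c * a) = 1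
      rw [mul_inv_rev]
      rw [eq_mul_inv_iff_mul_eq]
      exact (inv_eq_of_mul_eq_one_right hrel).symm
    · exact eq_inv_of_mul_eq_one_left hrel
    · rw [mul_inv_rev, eq_mul_inv_iff_mul_eq]
      exact (inv_eq_of_mul_eq_one_right hrel).symm
    · -- a * (a * c) = 1
      rw [← mul_assoc] at hrel
      exact (inv_eq_of_mul_eq_one_right hrel).symm
    · rw [← mul_assoc] at hrel
      exact (inv_eq_of_mul_eq_one_right hrel).symm
  have haa : a * a ≠ 1 := by
    intro h
    exact hc (by rw [hcc, h, inv_one])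
  have ha3 : a * (a * a) ≠ 1 := by
    intro h
    exact hac ((eq_inv_of_mul_eq_one_left h).trans hcc.symm)
  have him : ∀ g : G, wgt (psi a a g) = dd a a c := by
    intro g
    rw [wgt_psi ha ha haa, ← hcc, dd]
  have hsurj : ∀ σ : Equiv.Perm G, wgt σ = dd a a c → ∃ g, psi a a g = σ := by
    intro σ hσ
    obtain ⟨p, q, r, hpq, hqr, hpr, hcyc, heq⟩ := exists_cyc ha ha hc hσ
    have hrot : cyc p q r = cyc q r p := cyc_rot hpq hqr hpr
    have hrot2 : cyc q r p = cyc r p q := cyc_rot hqr (Ne.symm hpr) (Ne.symm hpq)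
    rcases three_singles heq with ⟨hu, ⟨hv, hw⟩ | ⟨hv, hw⟩⟩ | ⟨hu, ⟨hv, hw⟩ | ⟨hv, hw⟩⟩ |
      ⟨hu, ⟨hv, hw⟩ | ⟨hv, hw⟩⟩
    · -- (a, a, c) : start p
      refine ⟨p, ?_⟩
      have hq : q = a * p := mul_inv_eq_iff_eq_mul.mp hu
      have hr : r = a * q := mul_inv_eq_iff_eq_mul.mp hv
      rw [hcyc, psi, ← hq, ← hr]
    · -- (a, c, a) : start r
      refine ⟨r, ?_⟩
      have hp : p = a * r := mul_inv_eq_iff_eq_mul.mp hw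
      have hq : q = a * p := mul_inv_eq_iff_eq_mul.mp hu
      rw [hcyc, hrot, hrot2, psi, ← hp, ← hq]
    · -- (a, a, c)
      refine ⟨p, ?_⟩
      have hq : q = a * p := mul_inv_eq_iff_eq_mul.mp hu
      have hr : r = a * q := mul_inv_eq_iff_eq_mul.mp hv
      rw [hcyc, psi, ← hq, ← hr]
    · -- (a, c, a)
      refine ⟨r, ?_⟩
      have hp : p = a * r := mul_inv_eq_iff_eq_mul.mp hw
      have hq : q = a * p := mul_inv_eq_iff_eq_mul.mp hu
      rw [hcyc, hrot, hrot2, psi, ← hp, ← hq]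
    · -- (c, a, a) : start q
      refine ⟨q, ?_⟩
      have hr : r = a * q := mul_inv_eq_iff_eq_mul.mp hv
      have hp : p = a * r := mul_inv_eq_iff_eq_mul.mp hw
      rw [hcyc, hrot, psi, ← hr, ← hp]
    · refine ⟨q, ?_⟩
      have hr : r = a * q := mul_inv_eq_iff_eq_mul.mp hv
      have hp : p = a * r := mul_inv_eq_iff_eq_mul.mp hw
      rw [hcyc, hrot, psi, ← hr, ← hp]
  have hKim : (Finset.univ.filter fun σ : Equiv.Perm G => wgt σ = dd a a c)
      = Finset.image (psi a a) Finset.univ := by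
    ext σ
    rw [Finset.mem_filter, Finset.mem_image]
    constructor
    · intro hσ
      obtain ⟨g, hg⟩ := hsurj σ hσ.2
      exact ⟨g, Finset.mem_univ g, hg⟩
    · rintro ⟨g, _, rfl⟩
      exact ⟨Finset.mem_univ _, him g⟩
  rw [hKim, Finset.card_image_of_injective _ (psi_inj_eq ha haa ha3), Finset.card_univ]

lemma classB_of_cab {a b c : G} (h : c * (a * b) = 1) : b * (c * a) = 1 := by
  have hc' : c = (a * b)⁻¹ := eq_inv_of_mul_eq_one_left h
  rw [hc', mul_inv_rev]
  simp [mul_assoc]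

lemma classB_of_abc {a b c : G} (h : a * (b * c) = 1) : b * (c * a) = 1 := by
  have h' : b * c = a⁻¹ := (inv_eq_of_mul_eq_one_right h).symm
  rw [← mul_assoc, h', inv_mul_cancel]

lemma classA_of_acb {a b c : G} (h : a * (c * b) = 1) : c * (b * a) = 1 := by
  have h' : c * b = a⁻¹ := (inv_eq_of_mul_eq_one_right h).symm
  rw [← mul_assoc, h', inv_mul_cancel]

lemma classA_of_bac {a b c : G} (h : b * (a * c) = 1) : c * (b * a) = 1 := by
  have h1 : a * c = b⁻¹ := (inv_eq_of_mul_eq_one_right h).symm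
  have hc' : c = a⁻¹ * b⁻¹ := eq_inv_mul_iff_mul_eq.mpr h1
  rw [hc']
  simp [mul_assoc]

/-- The generic "one cyclic class" counting: if `c * (b * a) = 1` then the permutations
with weight `dd a b c` and value pattern in the cyclic class of `(a, b, c)` are exactly
the `psi a b g`. -/
lemma filter_eq_image_psi {a b c : G} (ha : a ≠ 1) (hb : b ≠ 1) (hc : c ≠ 1)
    (hab : a ≠ b) (hac : a ≠ c)
    (hrel : c * (b * a) = 1) (hnot : b * (c * a) ≠ 1) :
    (Finset.univ.filter fun σ : Equiv.Perm G => wgt σ = dd a b c)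
      = Finset.image (psi a b) Finset.univ := by
  have hcinv : c = (b * a)⁻¹ := eq_inv_of_mul_eq_one_left hrel
  have hba : b * a ≠ 1 := by
    intro h
    exact hc (by rw [hcinv, h, inv_one])
  have him : ∀ g : G, wgt (psi a b g) = dd a b c := by
    intro g
    rw [wgt_psi ha hb hba, ← hcinv, dd]
  have hsurj : ∀ σ : Equiv.Perm G, wgt σ = dd a b c → ∃ g, psi a b g = σ := by
    intro σ hσ
    obtain ⟨p, q, r, hpq, hqr, hpr, hcyc, heq⟩ := exists_cyc ha hb hc hσ
    have hrot : cyc p q r = cyc q r p := cyc_rot hpq hqr hpr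
    have hrot2 : cyc q r p = cyc r p q := cyc_rot hqr (Ne.symm hpr) (Ne.symm hpq)
    have hrelpqr := hrel_cyc p q r
    rcases three_singles heq with ⟨hu, ⟨hv, hw⟩ | ⟨hv, hw⟩⟩ | ⟨hu, ⟨hv, hw⟩ | ⟨hv, hw⟩⟩ |
      ⟨hu, ⟨hv, hw⟩ | ⟨hv, hw⟩⟩
    · -- (a, b, c) : start p
      refine ⟨p, ?_⟩
      have hq : q = a * p := mul_inv_eq_iff_eq_mul.mp hu
      have hr : r = b * q := mul_inv_eq_iff_eq_mul.mp hv
      rw [hcyc, psi, ← hq, ← hr]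
    · -- (a, c, b) : class B, contradiction
      exfalso
      rw [hu, hv, hw] at hrelpqr
      exact hnot hrelpqr
    · -- (b, a, c) : class B (c * (a * b) = 1), contradiction
      exfalso
      rw [hu, hv, hw] at hrelpqr
      exact hnot (classB_of_cab hrelpqr)
    · -- (b, c, a) : start r
      refine ⟨r, ?_⟩
      have hp : p = a * r := mul_inv_eq_iff_eq_mul.mp hw
      have hq : q = b * p := mul_inv_eq_iff_eq_mul.mp hu
      rw [hcyc, hrot, hrot2, psi, ← hp, ← hq]
    · -- (c, a, b) : start q
      refine ⟨q, ?_⟩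
      have hr : r = a * q := mul_inv_eq_iff_eq_mul.mp hv
      have hp : p = b * r := mul_inv_eq_iff_eq_mul.mp hw
      rw [hcyc, hrot, psi, ← hr, ← hp]
    · -- (c, b, a) : class B (a * (b * c) = 1), contradiction
      exfalso
      rw [hu, hv, hw] at hrelpqr
      exact hnot (classB_of_abc hrelpqr)
  ext σ
  rw [Finset.mem_filter, Finset.mem_image]
  constructor
  · intro hσ
    obtain ⟨g, hg⟩ := hsurj σ hσ.2
    exact ⟨g, Finset.mem_univ g, hg⟩
  · rintro ⟨g, _, rfl⟩
    exact ⟨Finset.mem_univ _, him g⟩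

lemma card_oneclass {a b c : G} (ha : a ≠ 1) (hb : b ≠ 1) (hc : c ≠ 1)
    (hab : a ≠ b) (hac : a ≠ c)
    (hrel : c * (b * a) = 1) (hnot : b * (c * a) ≠ 1) :
    (Finset.univ.filter fun σ : Equiv.Perm G => wgt σ = dd a b c).card
      = Fintype.card G := by
  have hcinv : c = (b * a)⁻¹ := eq_inv_of_mul_eq_one_left hrel
  have hba : b * a ≠ 1 := fun h => hc (by rw [hcinv, h, inv_one])
  have h3 : a * (b * a) ≠ 1 := by
    intro h
    exact hac ((eq_inv_of_mul_eq_one_left h).trans hcinv.symm)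
  rw [filter_eq_image_psi ha hb hc hab hac hrel hnot,
    Finset.card_image_of_injective _ (psi_inj_ne ha hb hba hab h3), Finset.card_univ]

lemma card_twoclass {a b c : G} (ha : a ≠ 1) (hb : b ≠ 1) (hc : c ≠ 1)
    (hab : a ≠ b) (hac : a ≠ c) (hbc : b ≠ c)
    (hrel1 : c * (b * a) = 1) (hrel2 : b * (c * a) = 1) :
    (Finset.univ.filter fun σ : Equiv.Perm G => wgt σ = dd a b c).card
      = 2 * Fintype.card G := by
  have hcinv : c = (b * a)⁻¹ := eq_inv_of_mul_eq_one_left hrel1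
  have hbinv : b = (c * a)⁻¹ := eq_inv_of_mul_eq_one_left hrel2
  have hba : b * a ≠ 1 := fun h => hc (by rw [hcinv, h, inv_one])
  have hca : c * a ≠ 1 := fun h => hb (by rw [hbinv, h, inv_one])
  have h3ab : a * (b * a) ≠ 1 := fun h =>
    hac ((eq_inv_of_mul_eq_one_left h).trans hcinv.symm)
  have h3ac : a * (c * a) ≠ 1 := fun h =>
    hab ((eq_inv_of_mul_eq_one_left h).trans hbinv.symm)
  have him1 : ∀ g : G, wgt (psi a b g) = dd a b c := by
    intro g
    rw [wgt_psi ha hb hba, ← hcinv, dd]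
  have him2 : ∀ g : G, wgt (psi a c g) = dd a b c := by
    intro g
    rw [wgt_psi ha hc hca, ← hbinv, dd]
    abel
  have hsurj : ∀ σ : Equiv.Perm G, wgt σ = dd a b c →
      (∃ g, psi a b g = σ) ∨ (∃ g, psi a c g = σ) := by
    intro σ hσ
    obtain ⟨p, q, r, hpq, hqr, hpr, hcyc, heq⟩ := exists_cyc ha hb hc hσ
    have hrot : cyc p q r = cyc q r p := cyc_rot hpq hqr hpr
    have hrot2 : cyc q r p = cyc r p q := cyc_rot hqr (Ne.symm hpr) (Ne.symm hpq)
    rcases three_singles heq with ⟨hu, ⟨hv, hw⟩ | ⟨hv, hw⟩⟩ | ⟨hu, ⟨hv, hw⟩ | ⟨hv, hw⟩⟩ |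
      ⟨hu, ⟨hv, hw⟩ | ⟨hv, hw⟩⟩
    · -- (a, b, c)
      refine Or.inl ⟨p, ?_⟩
      have hq : q = a * p := mul_inv_eq_iff_eq_mul.mp hu
      have hr : r = b * q := mul_inv_eq_iff_eq_mul.mp hv
      rw [hcyc, psi, ← hq, ← hr]
    · -- (a, c, b)
      refine Or.inr ⟨p, ?_⟩
      have hq : q = a * p := mul_inv_eq_iff_eq_mul.mp hu
      have hr : r = c * q := mul_inv_eq_iff_eq_mul.mp hv
      rw [hcyc, psi, ← hq, ← hr]
    · -- (b, a, c) : psi a c q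
      refine Or.inr ⟨q, ?_⟩
      have hr : r = a * q := mul_inv_eq_iff_eq_mul.mp hv
      have hp : p = c * r := mul_inv_eq_iff_eq_mul.mp hw
      rw [hcyc, hrot, psi, ← hr, ← hp]
    · -- (b, c, a) : psi a b r
      refine Or.inl ⟨r, ?_⟩
      have hp : p = a * r := mul_inv_eq_iff_eq_mul.mp hw
      have hq : q = b * p := mul_inv_eq_iff_eq_mul.mp hu
      rw [hcyc, hrot, hrot2, psi, ← hp, ← hq]
    · -- (c, a, b) : psi a b q
      refine Or.inl ⟨q, ?_⟩
      have hr : r = a * q := mul_inv_eq_iff_eq_mul.mp hv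
      have hp : p = b * r := mul_inv_eq_iff_eq_mul.mp hw
      rw [hcyc, hrot, psi, ← hr, ← hp]
    · -- (c, b, a) : psi a c r
      refine Or.inr ⟨r, ?_⟩
      have hp : p = a * r := mul_inv_eq_iff_eq_mul.mp hw
      have hq : q = c * p := mul_inv_eq_iff_eq_mul.mp hu
      rw [hcyc, hrot, hrot2, psi, ← hp, ← hq]
  have hdisj : ∀ g g' : G, psi a b g ≠ psi a c g' := by
    intro g g' h
    have hmoved : psi a b g g' ≠ g' := by
      rw [h, psi_apply1 ha hc]; exact (psi_dist1 ha g').symm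
    rcases psi_moved hmoved with h1 | h1 | h1
    · -- g' = g : compare at a*g
      have e1 : psi a b g (a * g) = b * (a * g) := psi_apply2 a b g
      rw [h, h1, psi_apply2] at e1
      exact hbc (mul_right_cancel e1).symm
    · -- g' = a*g
      have e1 : psi a b g g' = a * g' := by rw [h, psi_apply1 ha hc]
      rw [h1, psi_apply2] at e1
      exact hab (mul_right_cancel e1).symm
    · -- g' = b*(a*g)
      have e1 : psi a b g g' = a * g' := by rw [h, psi_apply1 ha hc]
      rw [h1, psi_apply3 hba hb] at e1
      have e2 : a * (b * (a * g)) = (a * (b * a)) * g := by simp [mul_assoc]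
      rw [e2] at e1
      exact h3ab (right_eq_mul.mp e1)
  have hKim : (Finset.univ.filter fun σ : Equiv.Perm G => wgt σ = dd a b c)
      = Finset.image (psi a b) Finset.univ ∪ Finset.image (psi a c) Finset.univ := by
    ext σ
    rw [Finset.mem_filter, Finset.mem_union, Finset.mem_image, Finset.mem_image]
    constructor
    · intro hσ
      rcases hsurj σ hσ.2 with ⟨g, hg⟩ | ⟨g, hg⟩
      · exact Or.inl ⟨g, Finset.mem_univ g, hg⟩
      · exact Or.inr ⟨g, Finset.mem_univ g, hg⟩
    · rintro (⟨g, _, rfl⟩ | ⟨g, _, rfl⟩)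
      · exact ⟨Finset.mem_univ _, him1 g⟩
      · exact ⟨Finset.mem_univ _, him2 g⟩
  rw [hKim, Finset.card_union_of_disjoint, Finset.card_image_of_injective _
    (psi_inj_ne ha hb hba hab h3ab), Finset.card_image_of_injective _
    (psi_inj_ne ha hc hca hac h3ac), Finset.card_univ, two_mul]
  rw [Finset.disjoint_left]
  rintro σ hσ1 hσ2
  rw [Finset.mem_image] at hσ1 hσ2
  obtain ⟨g, _, hg⟩ := hσ1
  obtain ⟨g', _, hg'⟩ := hσ2
  exact hdisj g g' (hg.trans hg'.symm)

lemma card_all_eq {a : G} (ha : a ≠ 1)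
    (hK : (Finset.univ.filter fun σ : Equiv.Perm G => wgt σ = dd a a a).Nonempty) :
    3 * (Finset.univ.filter fun σ : Equiv.Perm G => wgt σ = dd a a a).card
      = Fintype.card G := by
  -- derive a³ = 1
  have ha3 : a * (a * a) = 1 := by
    obtain ⟨σ0, hσ0⟩ := hK
    rw [Finset.mem_filter] at hσ0
    obtain ⟨p, q, r, hpq, hqr, hpr, hcyc, heq⟩ := exists_cyc ha ha ha hσ0.2
    have hrel := hrel_cyc p q r
    rcases three_singles heq with ⟨hu, ⟨hv, hw⟩ | ⟨hv, hw⟩⟩ | ⟨hu, ⟨hv, hw⟩ | ⟨hv, hw⟩⟩ |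
      ⟨hu, ⟨hv, hw⟩ | ⟨hv, hw⟩⟩ <;> rw [hu, hv, hw] at hrel <;> exact hrel
  have haa : a * a ≠ 1 := by
    intro h
    rw [h, mul_one] at ha3
    exact ha ha3
  have hainv : a = (a * a)⁻¹ := eq_inv_of_mul_eq_one_left ha3
  have him : ∀ g : G, wgt (psi a a g) = dd a a a := by
    intro g
    rw [wgt_psi ha ha haa, ← hainv, dd]
  have hsurj : ∀ σ : Equiv.Perm G, wgt σ = dd a a a → ∃ g, psi a a g = σ := by
    intro σ hσ
    obtain ⟨p, q, r, hpq, hqr, hpr, hcyc, heq⟩ := exists_cyc ha ha ha hσ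
    rcases three_singles heq with ⟨hu, ⟨hv, hw⟩ | ⟨hv, hw⟩⟩ | ⟨hu, ⟨hv, hw⟩ | ⟨hv, hw⟩⟩ |
      ⟨hu, ⟨hv, hw⟩ | ⟨hv, hw⟩⟩ <;>
    · refine ⟨p, ?_⟩
      have hq : q = a * p := mul_inv_eq_iff_eq_mul.mp hu
      have hr : r = a * q := mul_inv_eq_iff_eq_mul.mp hv
      rw [hcyc, psi, ← hq, ← hr]
  -- the key cycle identity : a * (a * (a * g)) = g
  have hcycle : ∀ g : G, a * (a * (a * g)) = g := by
    intro g
    have : a * (a * (a * g)) = (a * (a * a)) * g := by simp [mul_assoc]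
    rw [this, ha3, one_mul]
  have hrotpsi : ∀ g : G, psi a a (a * g) = psi a a g := by
    intro g
    rw [psi, psi, show a * (a * (a * g)) = g from hcycle g]
    exact (cyc_rot (psi_dist1 ha g) (psi_dist2 ha a g) (psi_dist3 haa g)).symm
  have hfiber : ∀ σ ∈ (Finset.univ.filter fun σ : Equiv.Perm G => wgt σ = dd a a a),
      (Finset.univ.filter fun g : G => psi a a g = σ).card = 3 := by
    intro σ hσ
    rw [Finset.mem_filter] at hσ
    obtain ⟨g, hg⟩ := hsurj σ hσ.2
    have hset : (Finset.univ.filter fun g' : G => psi a a g' = σ)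
        = {g, a * g, a * (a * g)} := by
      ext g'
      rw [Finset.mem_filter]
      simp only [Finset.mem_insert, Finset.mem_singleton]
      constructor
      · rintro ⟨-, hg'⟩
        have hmoved : psi a a g g' ≠ g' := by
          rw [hg, ← hg', psi_apply1 ha ha]
          exact (psi_dist1 ha g').symm
        rcases psi_moved hmoved with h1 | h1 | h1
        · exact Or.inl h1
        · exact Or.inr (Or.inl h1)
        · exact Or.inr (Or.inr h1)
      · rintro (rfl | rfl | rfl)
        · exact ⟨Finset.mem_univ _, hg⟩
        · refine ⟨Finset.mem_univ _, ?_⟩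
          rw [hrotpsi g, hg]
        · refine ⟨Finset.mem_univ _, ?_⟩
          rw [hrotpsi (a * g), hrotpsi g, hg]
    rw [hset]
    rw [Finset.card_insert_of_notMem, Finset.card_insert_of_notMem,
      Finset.card_singleton]
    · simp only [Finset.mem_singleton]
      exact psi_dist2 ha a g
    · simp only [Finset.mem_insert, Finset.mem_singleton]
      push_neg
      exact ⟨psi_dist1 ha g, psi_dist3 haa g⟩
  have hcount := Finset.card_eq_sum_card_fiberwise
    (f := psi a a) (s := Finset.univ)
    (t := Finset.univ.filter fun σ : Equiv.Perm G => wgt σ = dd a a a)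
    (fun g _ => Finset.mem_filter.mpr ⟨Finset.mem_univ _, him g⟩)
  rw [Finset.sum_congr rfl hfiber, Finset.sum_const, smul_eq_mul, Finset.card_univ]
    at hcount
  rw [mul_comm]
  exact hcount.symm

lemma coeff_genGroupDet (S : Set G) (h1S : (1:G) ∈ S) (a b c : S) :
    MvPolynomial.coeff
      (Finsupp.single (⟨1, h1S⟩ : S) (Fintype.card G - 3) +
        Finsupp.single a 1 + Finsupp.single b 1 + Finsupp.single c 1)
      (genGroupDet ℂ G S)
      = ∑ σ ∈ Finset.univ.filter (fun σ : Equiv.Perm G => wgt σ = dd ↑a ↑b ↑c),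
        ((Equiv.Perm.sign σ : ℤ) : ℂ) := by
  classical
  set d : S →₀ ℕ := Finsupp.single (⟨1, h1S⟩ : S) (Fintype.card G - 3) +
        Finsupp.single a 1 + Finsupp.single b 1 + Finsupp.single c 1 with hd
  have h1 : Fintype.ofFinite G = ‹Fintype G› := Subsingleton.elim _ _
  unfold genGroupDet
  rw [h1]
  rw [Subsingleton.elim (fun a b => Classical.propDecidable (a = b) : DecidableEq G)
    ‹DecidableEq G›]
  rw [Matrix.det_apply', MvPolynomial.coeff_sum, Finset.sum_filter]
  refine Finset.sum_congr rfl fun σ _ => ?_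
  have hC : ∀ p : MvPolynomial S ℂ, MvPolynomial.coeff d
      (((Equiv.Perm.sign σ : ℤ) : MvPolynomial S ℂ) * p)
      = ((Equiv.Perm.sign σ : ℤ) : ℂ) * MvPolynomial.coeff d p := by
    intro p
    rw [← map_intCast (MvPolynomial.C : ℂ →+* MvPolynomial S ℂ), MvPolynomial.coeff_C_mul]
  rw [hC]
  by_cases hall : ∀ i : G, σ i * i⁻¹ ∈ S
  · have hprod : (∏ i : G, Matrix.of (fun g h : G =>
        if hm : g * h⁻¹ ∈ S then (MvPolynomial.X (⟨g * h⁻¹, hm⟩ : S) :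
          MvPolynomial S ℂ) else 0) (σ i) i)
        = MvPolynomial.monomial (∑ i : G, Finsupp.single
            (⟨σ i * i⁻¹, hall i⟩ : S) 1) 1 := by
      rw [← prodX]
      refine Finset.prod_congr rfl fun i _ => ?_
      simp only [Matrix.of_apply]
      rw [dif_pos (hall i)]
    rw [hprod, MvPolynomial.coeff_monomial]
    have hmap1 : Finsupp.mapDomain (Subtype.val : S → G)
        (∑ i : G, Finsupp.single (⟨σ i * i⁻¹, hall i⟩ : S) (1:ℕ)) = wgt σ := by
      rw [Finsupp.mapDomain_finset_sum, wgt]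
      exact Finset.sum_congr rfl fun i _ => Finsupp.mapDomain_single
    have hmap2 : Finsupp.mapDomain (Subtype.val : S → G) d = dd ↑a ↑b ↑c := by
      rw [hd, dd]
      simp only [Finsupp.mapDomain_add, Finsupp.mapDomain_single]
    have hiff : (∑ i : G, Finsupp.single (⟨σ i * i⁻¹, hall i⟩ : S) (1:ℕ)) = d
        ↔ wgt σ = dd ↑a ↑b ↑c := by
      constructor
      · intro h
        rw [← hmap1, ← hmap2, h]
      · intro h
        refine Finsupp.mapDomain_injective (Subtype.val_injective) ?_
        rw [hmap1, hmap2, h]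
    by_cases hw : wgt σ = dd ↑a ↑b ↑c
    · rw [if_pos hw, if_pos (hiff.mpr hw), mul_one]
    · rw [if_neg hw, if_neg (fun h => hw (hiff.mp h)), mul_zero]
  · push_neg at hall
    obtain ⟨i, hi⟩ := hall
    have hzero : (∏ i : G, Matrix.of (fun g h : G =>
        if hm : g * h⁻¹ ∈ S then (MvPolynomial.X (⟨g * h⁻¹, hm⟩ : S) :
          MvPolynomial S ℂ) else 0) (σ i) i) = 0 := by
      refine Finset.prod_eq_zero (Finset.mem_univ i) ?_
      simp only [Matrix.of_apply]
      rw [dif_neg hi]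
    rw [hzero, MvPolynomial.coeff_zero, mul_zero]
    have hw : wgt σ ≠ dd ↑a ↑b ↑c := by
      intro h
      have h2 : wgt σ (σ i * i⁻¹) = 0 := by
        rw [h, dd]
        have hne : ∀ y : G, y ∈ S → Finsupp.single y (1:ℕ) (σ i * i⁻¹) = 0 := by
          intro y hy
          exact Finsupp.single_eq_of_ne (fun hh => hi (hh ▸ hy))
        have hne1 : Finsupp.single (1:G) (Fintype.card G - 3) (σ i * i⁻¹) = 0 :=
          Finsupp.single_eq_of_ne (fun hh => hi (hh ▸ h1S))
        simp only [Finsupp.add_apply, hne1, hne ↑a a.2, hne ↑b b.2, hne ↑c c.2]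
      rw [wgt_apply] at h2
      have h3 : i ∈ Finset.univ.filter (fun g => σ g * g⁻¹ = σ i * i⁻¹) :=
        Finset.mem_filter.mpr ⟨Finset.mem_univ i, rfl⟩
      rw [Finset.card_eq_zero] at h2
      rw [h2] at h3
      exact absurd h3 (Finset.notMem_empty i)
    rw [if_neg hw]

lemma cycl_one {x y : G} (h : x * y = 1) : y * x = 1 := by
  rw [mul_eq_one_iff_eq_inv] at h
  rw [h, mul_inv_cancel]

lemma classAB {a b c : G} (ha : a ≠ 1) (hb : b ≠ 1) (hc : c ≠ 1)
    (hK : (Finset.univ.filter fun σ : Equiv.Perm G => wgt σ = dd a b c).Nonempty) :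
    c * (b * a) = 1 ∨ b * (c * a) = 1 := by
  obtain ⟨σ0, hσ0⟩ := hK
  rw [Finset.mem_filter] at hσ0
  obtain ⟨p, q, r, hpq, hqr, hpr, hcyc, heq⟩ := exists_cyc ha hb hc hσ0.2
  have hrel := hrel_cyc p q r
  rcases three_singles heq with ⟨hu, ⟨hv, hw⟩ | ⟨hv, hw⟩⟩ | ⟨hu, ⟨hv, hw⟩ | ⟨hv, hw⟩⟩ |
    ⟨hu, ⟨hv, hw⟩ | ⟨hv, hw⟩⟩ <;> rw [hu, hv, hw] at hrel
  · exact Or.inl hrel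
  · exact Or.inr hrel
  · exact Or.inr (classB_of_cab hrel)
  · exact Or.inl (classA_of_acb hrel)
  · exact Or.inl (classA_of_bac hrel)
  · exact Or.inr (classB_of_abc hrel)

lemma coeff_eq_card (S : Set G) (h1S : (1:G) ∈ S) (a b c : S)
    (ha : (a : G) ≠ 1) (hb : (b : G) ≠ 1) (hc : (c : G) ≠ 1) :
    MvPolynomial.coeff
      (Finsupp.single (⟨1, h1S⟩ : S) (Fintype.card G - 3) +
        Finsupp.single a 1 + Finsupp.single b 1 + Finsupp.single c 1)
      (genGroupDet ℂ G S)
      = ((Finset.univ.filter fun σ : Equiv.Perm G =>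
          wgt σ = dd (↑a) (↑b) (↑c)).card : ℂ) := by
  rw [coeff_genGroupDet S h1S a b c]
  have hone : ∀ σ ∈ (Finset.univ.filter fun σ : Equiv.Perm G =>
      wgt σ = dd (↑a) (↑b) (↑c)), ((Equiv.Perm.sign σ : ℤ) : ℂ) = 1 := by
    intro σ hσ
    rw [Finset.mem_filter] at hσ
    obtain ⟨p, q, r, hpq, hqr, hpr, hcyc, -⟩ := exists_cyc ha hb hc hσ.2
    rw [hcyc, sign_cyc hpq hpr]
    simp

  rw [Finset.sum_congr rfl hone, Finset.sum_const, nsmul_eq_mul, mul_one]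

lemma comm_of_both {a b c : G} (hA : c * (b * a) = 1) (hB : b * (c * a) = 1) :
    a * b = b * a := by
  have hc1 : c = (b * a)⁻¹ := eq_inv_of_mul_eq_one_left hA
  have hc2 : c = b⁻¹ * a⁻¹ :=
    eq_mul_inv_iff_mul_eq.mpr ((inv_eq_of_mul_eq_one_right hB).symm)
  have h3 : (b * a)⁻¹ = (a * b)⁻¹ := by rw [← hc1, hc2, mul_inv_rev]
  exact (inv_injective h3).symm

lemma dd_swap23 (x y z : G) : dd x y z = dd x z y := by rw [dd, dd]; abel

lemma dd_131 (x y : G) : dd x y x = dd x x y := by rw [dd, dd]; abel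

lemma dd_233 (x y : G) : dd x y y = dd y y x := by rw [dd, dd]; abel

end Main

/-- If `a, b, c ∈ S` are all `≠ e` and the monomial `x_e^{n-3} x_a x_b x_c` occurs in the
generalized group determinant `Θ_G(S)` (`n = |G|`), then its coefficient is: `n/3` if
`a = b = c`; `n` if exactly two of them are equal; `n` if they are pairwise distinct and
`ab ≠ ba`; and `2n` if they are pairwise distinct and `ab = ba`. -/
theorem coeff_genGroupDet_cases {G : Type*} [Group G] [Fintype G]
    (S : Set G) (h1S : (1 : G) ∈ S) (a b c : S)
    (ha : (a : G) ≠ 1) (hb : (b : G) ≠ 1) (hc : (c : G) ≠ 1)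
    (hocc : MvPolynomial.coeff
      (Finsupp.single (⟨1, h1S⟩ : S) (Fintype.card G - 3) +
        Finsupp.single a 1 + Finsupp.single b 1 + Finsupp.single c 1)
      (genGroupDet ℂ G S) ≠ 0) :
    (a = b ∧ b = c →
      MvPolynomial.coeff
        (Finsupp.single (⟨1, h1S⟩ : S) (Fintype.card G - 3) +
          Finsupp.single a 1 + Finsupp.single b 1 + Finsupp.single c 1)
        (genGroupDet ℂ G S) = (Fintype.card G : ℂ) / 3) ∧
    ((a = b ∧ a ≠ c) ∨ (a = c ∧ a ≠ b) ∨ (b = c ∧ a ≠ b) →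
      MvPolynomial.coeff
        (Finsupp.single (⟨1, h1S⟩ : S) (Fintype.card G - 3) +
          Finsupp.single a 1 + Finsupp.single b 1 + Finsupp.single c 1)
        (genGroupDet ℂ G S) = (Fintype.card G : ℂ)) ∧
    (a ≠ b → a ≠ c → b ≠ c → (a : G) * b ≠ (b : G) * a →
      MvPolynomial.coeff
        (Finsupp.single (⟨1, h1S⟩ : S) (Fintype.card G - 3) +
          Finsupp.single a 1 + Finsupp.single b 1 + Finsupp.single c 1)
        (genGroupDet ℂ G S) = (Fintype.card G : ℂ)) ∧
    (a ≠ b → a ≠ c → b ≠ c → (a : G) * b = (b : G) * a →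
      MvPolynomial.coeff
        (Finsupp.single (⟨1, h1S⟩ : S) (Fintype.card G - 3) +
          Finsupp.single a 1 + Finsupp.single b 1 + Finsupp.single c 1)
        (genGroupDet ℂ G S) = 2 * (Fintype.card G : ℂ)) := by
  classical
  rw [coeff_eq_card S h1S a b c ha hb hc] at hocc ⊢
  have hcard : (Finset.univ.filter fun σ : Equiv.Perm G =>
      wgt σ = dd (↑a) (↑b) (↑c)).card ≠ 0 := Nat.cast_ne_zero.mp hocc
  have hK : (Finset.univ.filter fun σ : Equiv.Perm G =>
      wgt σ = dd (↑a) (↑b) (↑c)).Nonempty :=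
    Finset.card_pos.mp (Nat.pos_of_ne_zero hcard)
  refine ⟨?_, ?_, ?_, ?_⟩
  · rintro ⟨rfl, rfl⟩
    have h3 := card_all_eq ha hK
    rw [eq_div_iff (by norm_num : (3:ℂ) ≠ 0), mul_comm]
    exact_mod_cast h3
  · rintro (⟨rfl, hne⟩ | ⟨rfl, hne⟩ | ⟨rfl, hne⟩)
    · have hne' : (↑a : G) ≠ ↑c := fun h => hne (Subtype.ext h)
      exact_mod_cast card_two_eq ha hc hne' hK
    · have hne' : (↑a : G) ≠ ↑b := fun h => hne (Subtype.ext h)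
      rw [dd_131] at hK ⊢
      exact_mod_cast card_two_eq ha hb hne' hK
    · have hne' : (↑b : G) ≠ ↑a := fun h => hne (Subtype.ext h.symm)
      rw [dd_233] at hK ⊢
      exact_mod_cast card_two_eq hb ha hne' hK
  · intro hab hac hbc hcomm
    have hab' : (↑a : G) ≠ ↑b := fun h => hab (Subtype.ext h)
    have hac' : (↑a : G) ≠ ↑c := fun h => hac (Subtype.ext h)
    have hbc' : (↑b : G) ≠ ↑c := fun h => hbc (Subtype.ext h)
    rcases classAB ha hb hc hK with hA | hB
    · have hnotB : (↑b : G) * (↑c * ↑a) ≠ 1 := fun h => hcomm (comm_of_both hA h)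
      exact_mod_cast card_oneclass ha hb hc hab' hac' hA hnotB
    · have hnotA : (↑c : G) * (↑b * ↑a) ≠ 1 := fun h => hcomm (comm_of_both h hB)
      have h1 := card_oneclass (a := (↑a : G)) (b := ↑c) (c := ↑b)
        ha hc hb hac' hab' hB hnotA
      rw [dd_swap23] at h1
      exact_mod_cast h1
  · intro hab hac hbc hcomm
    have hab' : (↑a : G) ≠ ↑b := fun h => hab (Subtype.ext h)
    have hac' : (↑a : G) ≠ ↑c := fun h => hac (Subtype.ext h)
    have hbc' : (↑b : G) ≠ ↑c := fun h => hbc (Subtype.ext h)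
    have hboth : (↑c : G) * (↑b * ↑a) = 1 ∧ (↑b : G) * (↑c * ↑a) = 1 := by
      rcases classAB ha hb hc hK with hA | hB
      · refine ⟨hA, ?_⟩
        rw [← hcomm] at hA
        exact classB_of_cab hA
      · refine ⟨?_, hB⟩
        have h1 := cycl_one hB
        rw [mul_assoc, hcomm] at h1
        exact h1
    have h2 := card_twoclass ha hb hc hab' hac' hbc' hboth.1 hboth.2
    rw [h2]
    push_cast
    ring
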